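/- Consider a finite discounted MDP and inverse temperature τ ≥ 0. For every initial Q-function Q_0 : S → A → ℝ, every k ≥ 0, and every (s,a), (T_soft^k Q_0)(s,a) ≤ (T^k Q_0)(s,a), where T is the standard Bellman operator and T_soft is the softmax Bellman operator. -/

import Mathlib

/-- The softmax-weighted value `g_x(τ) = (∑ a, exp(τ·x_a)·x_a) / (∑ a, exp(τ·x_a))`
over a finite action type. -/
noncomputable def gval {A : Type*} [Fintype A] (x : A → ℝ) (τ : ℝ) : ℝ :=
  (∑ a, Real.exp (τ * x a) * x a) / (∑ a, Real.exp (τ * x a))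

/-- The softmax Bellman operator
`(T_soft Q)(s,a) = R(s,a) + γ·∑ s', P(s'|s,a)·g_{Q(s',·)}(τ)`. -/
noncomputable def Tsoft {S A : Type*} [Fintype S] [Fintype A]
    (P : S → A → S → ℝ) (R : S → A → ℝ) (γ τ : ℝ) (Q : S → A → ℝ) :
    S → A → ℝ :=
  fun s a => R s a + γ * ∑ s', P s a s' * gval (Q s') τ

/-- The standard Bellman operator
`(T Q)(s,a) = R(s,a) + γ·∑ s', P(s'|s,a)·max_{a'} Q(s',a')`. -/
noncomputable def Tstd {S A : Type*} [Fintype S] [Fintype A] [Nonempty A]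
    (P : S → A → S → ℝ) (R : S → A → ℝ) (γ : ℝ) (Q : S → A → ℝ) :
    S → A → ℝ :=
  fun s a => R s a + γ * ∑ s', P s a s' * Finset.univ.sup' Finset.univ_nonempty (Q s')

lemma gval_le_sup {A : Type*} [Fintype A] [Nonempty A] (x : A → ℝ) (τ : ℝ) :
    gval x τ ≤ Finset.univ.sup' Finset.univ_nonempty x := by
  have hpos : 0 < ∑ a : A, Real.exp (τ * x a) :=
    Finset.sum_pos (fun a _ => Real.exp_pos _) Finset.univ_nonempty
  rw [gval, div_le_iff₀ hpos, Finset.mul_sum]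
  refine Finset.sum_le_sum fun a _ => ?_
  rw [mul_comm (Finset.univ.sup' _ x)]
  exact mul_le_mul_of_nonneg_left (Finset.le_sup' x (Finset.mem_univ a)) (Real.exp_pos _).le

/-- The softmax Bellman iterates are pointwise dominated by the standard Bellman
iterates: `(T_soft^k Q_0)(s,a) ≤ (T^k Q_0)(s,a)`. -/
theorem tsoft_iterate_le_tstd_iterate
    {S A : Type*} [Fintype S] [Fintype A] [Nonempty S] [Nonempty A]
    (P : S → A → S → ℝ) (R : S → A → ℝ) (γ τ : ℝ)
    (hγ : γ ∈ Set.Ioo (0 : ℝ) 1) (hτ : 0 ≤ τ)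
    (hP : ∀ s a s', 0 ≤ P s a s') (hP1 : ∀ s a, ∑ s', P s a s' = 1)
    (Q0 : S → A → ℝ) (k : ℕ) (s : S) (a : A) :
    ((Tsoft P R γ τ)^[k] Q0) s a ≤ ((Tstd P R γ)^[k] Q0) s a := by
  induction k generalizing s a with
  | zero => simp
  | succ n ih =>
    rw [Function.iterate_succ_apply', Function.iterate_succ_apply']
    have step1 : Tsoft P R γ τ ((Tsoft P R γ τ)^[n] Q0) s a ≤
        Tstd P R γ ((Tsoft P R γ τ)^[n] Q0) s a := by
      refine add_le_add_right (mul_le_mul_of_nonneg_left (Finset.sum_le_sum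
        fun s' _ => mul_le_mul_of_nonneg_left (gval_le_sup _ τ) (hP s a s')) hγ.1.le) _
    refine step1.trans ?_
    refine add_le_add_right (mul_le_mul_of_nonneg_left (Finset.sum_le_sum
      fun s' _ => mul_le_mul_of_nonneg_left ?_ (hP s a s')) hγ.1.le) _
    refine Finset.sup'_le _ _ fun b _ => ?_
    exact le_trans (ih s' b) (Finset.le_sup' _ (Finset.mem_univ b))
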